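/- For the Betti number difference formula of a non-special curve: for integers d, g, p with d > g ≥ 0 and 0 ≤ p ≤ d - g - 1, the alternating diagonal sum equals b_{p+1,1} - b_{p,2} = (p+1) * C(d-g, p+1) * ((d+1-g)/(p+2) - d/(d-g)), i.e. as rational numbers, (p+1) * (d-g choose p+1) * ((d+1-g)*(d-g) - d*(p+2)) / ((p+2)*(d-g)) is an integer. -/

import Mathlib

/-- For integers `d > g ≥ 0` and `0 ≤ p ≤ d - g - 1`, the rational number
`(p+1) * C(d-g, p+1) * ((d+1-g)*(d-g) - d*(p+2)) / ((p+2)*(d-g))`,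
which computes the Betti number difference `b_{p+1,1} - b_{p,2}` of a
non-special curve of degree `d` and genus `g`, is an integer. -/
theorem betti_difference_is_integer (d g p : ℕ) (hdg : g < d) (hp : p ≤ d - g - 1) :
    ∃ z : ℤ,
      (((p : ℚ) + 1) * ((d - g).choose (p + 1)) *
          (((d : ℚ) + 1 - g) * ((d : ℚ) - g) - (d : ℚ) * ((p : ℚ) + 2))) /
        (((p : ℚ) + 2) * ((d : ℚ) - g)) = (z : ℚ) := by
  set n : ℕ := d - g with hn
  have hn1 : 1 ≤ n := Nat.sub_pos_of_lt hdg
  have hgd : (g : ℚ) ≤ (d : ℚ) := by exact_mod_cast hdg.le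
  have hcast : (n : ℚ) = (d : ℚ) - (g : ℚ) := by
    rw [hn]; push_cast [Nat.cast_sub hdg.le]; ring
  refine ⟨(p + 1) * (n + 1).choose (p + 2) - d * (n - 1).choose p, ?_⟩
  have h1 : ((n : ℚ) + 1) * (n.choose (p + 1)) = ((n + 1).choose (p + 2)) * ((p : ℚ) + 2) := by
    exact_mod_cast congrArg (Nat.cast : ℕ → ℚ) (Nat.add_one_mul_choose_eq n (p + 1))
  have h2 : (n : ℚ) * ((n - 1).choose p) = (n.choose (p + 1)) * ((p : ℚ) + 1) := by
    have := Nat.add_one_mul_choose_eq (n - 1) p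
    rw [Nat.sub_add_cancel hn1] at this
    exact_mod_cast congrArg (Nat.cast : ℕ → ℚ) this
  have hnq : (n : ℚ) ≠ 0 := by positivity
  have hpq : (p : ℚ) + 2 ≠ 0 := by positivity
  rw [← hcast, div_eq_iff (by exact mul_ne_zero hpq hnq)]
  have hd1g : (d : ℚ) + 1 - g = (n : ℚ) + 1 := by rw [hcast]; ring
  rw [hd1g]
  push_cast
  linear_combination ((p : ℚ) + 1) * n * h1 + (d : ℚ) * ((p : ℚ) + 2) * h2
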